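/- Laplace expansion for Schur functions: let α = (α_1,…,α_d) be a d-tuple and β = (β_1,…,β_{n−d}) an (n−d)-tuple of integers, and let α⊔β denote their concatenation as an n-tuple. Then, in the ring of symmetric functions, s_{α⊔β} = Σ_{μ ⊆ (n−d)^d} (−1)^{|μ|} s_{(α+(n−d)^d)/μ̂} · s_{β/μ~}, where the sum is over partitions μ fitting in a d×(n−d) rectangle, μ̂ = (n−d)^d − μ^← is the complement of μ in the rectangle, μ~ is the conjugate partition, and for integer tuples K, L one sets s_{K/L} = det(h_{k_i−i+j−l_j}). -/

import Mathlib

/-- The skew Jacobi–Trudi determinant `s_{K/L} = det(h_{K_i − i + j − L_j})_{1≤i,j≤m}` attached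
to arbitrary integer tuples `K, L`, where `h : ℤ → R` (with `h k = 0` for `k < 0`) plays the
role of the complete homogeneous symmetric functions. -/
noncomputable def skewJtDet {R : Type*} [CommRing R] (h : ℤ → R) (m : ℕ) (K L : Fin m → ℤ) : R :=
  Matrix.det (Matrix.of fun i j : Fin m => h (K i - (i : ℤ) + (j : ℤ) - L j))

namespace Stmt8Aux

open Finset

/-- Conjugate partition counting function. -/
def conjF (d : ℕ) (ν : ℕ → ℕ) (j : ℕ) : ℕ :=
  ((Finset.range d).filter fun i => j + 1 ≤ ν i).card

/-- The value map of the shuffle permutation attached to `ν`. -/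
def Pmap (d : ℕ) (ν : ℕ → ℕ) (x : ℕ) : ℕ :=
  if x < d then x + ν (d - 1 - x) else x - conjF d ν (x - d)

lemma conjF_le (d : ℕ) (ν : ℕ → ℕ) (j : ℕ) : conjF d ν j ≤ d := by
  classical
  refine le_trans (Finset.card_le_card (Finset.filter_subset _ _)) (by simp)

lemma conjF_anti (d : ℕ) (ν : ℕ → ℕ) {j j' : ℕ} (h : j ≤ j') :
    conjF d ν j' ≤ conjF d ν j := by
  classical
  refine Finset.card_le_card ?_
  intro i hi
  simp only [Finset.mem_filter] at hi ⊢
  exact ⟨hi.1, by omega⟩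

lemma conjF_ge (d : ℕ) (ν : ℕ → ℕ) (hanti : ∀ a b, a ≤ b → b < d → ν b ≤ ν a)
    {i j : ℕ} (hi : i < d) (hj : j + 1 ≤ ν i) : i + 1 ≤ conjF d ν j := by
  classical
  have hsub : Finset.range (i+1) ⊆ (Finset.range d).filter fun a => j + 1 ≤ ν a := by
    intro a ha
    simp only [Finset.mem_range] at ha
    simp only [Finset.mem_filter, Finset.mem_range]
    have := hanti a i (by omega) hi
    exact ⟨by omega, by omega⟩
  have := Finset.card_le_card hsub
  simpa [conjF] using this

lemma conjF_lt (d : ℕ) (ν : ℕ → ℕ) (hanti : ∀ a b, a ≤ b → b < d → ν b ≤ ν a)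
    {i j : ℕ} (hi : i < d) (hj : ν i ≤ j) : conjF d ν j ≤ i := by
  classical
  have hsub : ((Finset.range d).filter fun a => j + 1 ≤ ν a) ⊆ Finset.range i := by
    intro a ha
    simp only [Finset.mem_filter, Finset.mem_range] at ha
    simp only [Finset.mem_range]
    by_contra hai
    have := hanti i a (by omega) ha.1
    omega
  have := Finset.card_le_card hsub
  simpa [conjF] using this

lemma Pmap_lt (d e : ℕ) (ν : ℕ → ℕ) (hle : ∀ i, i < d → ν i ≤ e)
    {x : ℕ} (hx : x < d + e) : Pmap d ν x < d + e := by
  unfold Pmap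
  split
  · have := hle (d - 1 - x) (by omega)
    omega
  · omega

lemma Pmap_f_lt_f (d : ℕ) (ν : ℕ → ℕ) (hanti : ∀ a b, a ≤ b → b < d → ν b ≤ ν a)
    {x y : ℕ} (hxy : x < y) (hy : y < d) : Pmap d ν x < Pmap d ν y := by
  have h1 := hanti (d - 1 - y) (d - 1 - x) (by omega) (by omega)
  unfold Pmap
  rw [if_pos (by omega), if_pos hy]
  omega

lemma Pmap_f_ne_g (d : ℕ) (ν : ℕ → ℕ) (hanti : ∀ a b, a ≤ b → b < d → ν b ≤ ν a)
    {x y : ℕ} (hx : x < d) (hy : d ≤ y) : Pmap d ν x ≠ Pmap d ν y := by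
  intro heq
  unfold Pmap at heq
  rw [if_pos hx, if_neg (by omega)] at heq
  set i := d - 1 - x with hi
  set j := y - d with hj
  set m := ν i with hm
  set c := conjF d ν j with hc
  have hcd : c ≤ d := conjF_le d ν j
  have hkey : m + c = i + j + 1 := by omega
  by_cases hmj : j + 1 ≤ m
  · have := conjF_ge d ν hanti (i := i) (by omega) hmj
    omega
  · have := conjF_lt d ν hanti (i := i) (j := j) (by omega) (by omega)
    omega

lemma Pmap_g_lt_g (d : ℕ) (ν : ℕ → ℕ) {x y : ℕ} (hx : d ≤ x) (hxy : x < y) :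
    Pmap d ν x < Pmap d ν y := by
  have h1 : conjF d ν (y - d) ≤ conjF d ν (x - d) := conjF_anti d ν (by omega)
  have h2 := conjF_le d ν (x - d)
  have h3 := conjF_le d ν (y - d)
  unfold Pmap
  rw [if_neg (by omega), if_neg (by omega)]
  omega

lemma Pmap_injOn (d : ℕ) (ν : ℕ → ℕ) (hanti : ∀ a b, a ≤ b → b < d → ν b ≤ ν a)
    {x y : ℕ} (heq : Pmap d ν x = Pmap d ν y) : x = y := by
  rcases lt_trichotomy x y with h | h | h
  · by_cases hx : x < d
    · by_cases hy : y < d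
      · exact absurd heq (by have := Pmap_f_lt_f d ν hanti h hy; omega)
      · exact absurd heq (Pmap_f_ne_g d ν hanti hx (by omega))
    · have := Pmap_g_lt_g d ν (x := x) (y := y) (by omega) h
      omega
  · exact h
  · by_cases hy : y < d
    · by_cases hx : x < d
      · exact absurd heq (by have := Pmap_f_lt_f d ν hanti h hx; omega)
      · exact absurd heq.symm (Pmap_f_ne_g d ν hanti hy (by omega))
    · have := Pmap_g_lt_g d ν (x := y) (y := x) (by omega) h
      omega


lemma conjF_succ (d : ℕ) (ν : ℕ → ℕ) (j : ℕ) :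
    conjF (d+1) ν j = conjF d ν j + (if j + 1 ≤ ν d then 1 else 0) := by
  classical
  unfold conjF
  rw [Finset.range_add_one, Finset.filter_insert]
  split
  · rw [Finset.card_insert_of_notMem (by simp)]
  · omega

lemma sign_Pmap (e : ℕ) : ∀ (d : ℕ) (ν : ℕ → ℕ),
    (∀ a b, a ≤ b → b < d → ν b ≤ ν a) → (∀ i, i < d → ν i ≤ e) →
    ∀ (π : Equiv.Perm (Fin (d + e))), (∀ x : Fin (d + e), (π x : ℕ) = Pmap d ν (x : ℕ)) →
    Equiv.Perm.sign π = (-1) ^ (∑ i ∈ Finset.range d, ν i) := by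
  intro d
  induction d with
  | zero =>
    intro ν _ _ π hπ
    have hπ1 : π = Equiv.refl _ := by
      refine Equiv.ext fun x => Fin.ext ?_
      rw [hπ]
      simp [Pmap, conjF]
    simp [hπ1]
  | succ d ih =>
    intro ν hanti hle π hπ
    set a := ν d with ha_def
    have ha : a ≤ e := hle d (by omega)
    have hcast : d + 1 + e = (d + e) + 1 := by omega
    let ec : Fin (d + 1 + e) ≃ Fin (d + e + 1) := finCongr hcast
    set π' : Equiv.Perm (Fin (d + e + 1)) := (ec.symm.trans π).trans ec with hπ'def
    have hπ'sign : Equiv.Perm.sign π' = Equiv.Perm.sign π :=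
      Equiv.Perm.sign_symm_trans_trans π ec
    have hπ'val : ∀ x : Fin (d + e + 1), (π' x : ℕ) = Pmap (d+1) ν (x : ℕ) := by
      intro x
      have := hπ (ec.symm x)
      simpa [hπ'def, ec] using this
    set A : Fin (d + e + 1) := ⟨a, by omega⟩ with hA
    set χ : Equiv.Perm (Fin (d + e + 1)) := π'.trans (Fin.cycleRange A) with hχdef
    have hχ0 : χ 0 = 0 := by
      have h0 : π' 0 = A := by
        refine Fin.ext ?_
        rw [hπ'val]
        simp [Pmap, hA, ha_def]
      simp [hχdef, Equiv.trans_apply, h0, Fin.cycleRange_self]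
    set p := (Equiv.Perm.decomposeFin χ).1 with hp_def
    set σ' := (Equiv.Perm.decomposeFin χ).2 with hσ'def
    have hdec : χ = Equiv.Perm.decomposeFin.symm (p, σ') := by
      rw [hp_def, hσ'def]
      exact (Equiv.symm_apply_apply Equiv.Perm.decomposeFin χ).symm
    have hp0 : p = 0 := by
      have h1 : χ 0 = p := by
        rw [hdec]; exact Equiv.Perm.decomposeFin_symm_apply_zero p σ'
      rw [hχ0] at h1; exact h1.symm
    have hsucc : ∀ x : Fin (d + e), χ x.succ = (σ' x).succ := by
      intro x
      have h1 := Equiv.Perm.decomposeFin_symm_apply_succ σ' p x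
      rw [← hdec, hp0] at h1
      simpa using h1
    have hAv : (A : ℕ) = a := rfl
    have hσ'val : ∀ x : Fin (d + e), (σ' x : ℕ) = Pmap d ν (x : ℕ) := by
      intro x
      have h1 : ((σ' x).succ : ℕ) = (Fin.cycleRange A (π' x.succ) : ℕ) := by
        rw [← hsucc]; rfl
      rw [Fin.val_succ] at h1
      have h2 : (π' x.succ : ℕ) = Pmap (d+1) ν ((x:ℕ)+1) := by
        rw [hπ'val]; rfl
      by_cases hx : (x : ℕ) < d
      · have hv : (π' x.succ : ℕ) = (x:ℕ) + 1 + ν (d - 1 - (x:ℕ)) := by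
          rw [h2]
          unfold Pmap
          rw [if_pos (by omega)]
          have harg : d + 1 - 1 - ((x:ℕ)+1) = d - 1 - (x:ℕ) := by omega
          rw [harg]
        have hgt : A < π' x.succ := by
          rw [Fin.lt_def, hv, hAv]
          have := hanti (d - 1 - (x:ℕ)) d (by omega) (by omega)
          omega
        have h3 := Fin.cycleRange_of_gt hgt
        rw [h3, hv] at h1
        unfold Pmap
        rw [if_pos hx]
        omega
      · have hxd : d ≤ (x:ℕ) := by omega
        set j := (x:ℕ) - d with hj
        have hsum := conjF_succ d ν j
        set c := conjF d ν j with hc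
        have hcle : c ≤ d := conjF_le d ν j
        have h2' : (π' x.succ : ℕ) = (x:ℕ) + 1 - conjF (d+1) ν j := by
          rw [h2]
          unfold Pmap
          rw [if_neg (by omega)]
          have harg : (x:ℕ) + 1 - (d+1) = j := by omega
          rw [harg]
        by_cases hja : j + 1 ≤ a
        · have hcd : c = d := by
            refine le_antisymm hcle ?_
            rcases Nat.eq_zero_or_pos d with hd0 | hd0
            · omega
            · have hnu : j + 1 ≤ ν (d-1) := by
                have := hanti (d-1) d (by omega) (by omega)
                omega
              have := conjF_ge d ν (fun a b hab hb => hanti a b hab (by omega))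
                (i := d-1) (j := j) (by omega) hnu
              omega
          have hvj : (π' x.succ : ℕ) = j := by
            rw [h2', hsum, if_pos hja]
            omega
          have hlt : π' x.succ < A := by
            rw [Fin.lt_def, hvj, hAv]
            omega
          have h3 := Fin.coe_cycleRange_of_lt hlt
          rw [h3, hvj] at h1
          unfold Pmap
          rw [if_neg (by omega), ← hj, ← hc]
          omega
        · have hcc : conjF (d+1) ν j = c := by rw [hsum, if_neg (by omega)]; omega
          have hvj : (π' x.succ : ℕ) = (x:ℕ) + 1 - c := by rw [h2', hcc]
          have hgt : A < π' x.succ := by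
            rw [Fin.lt_def, hvj, hAv]
            omega
          have h3 := Fin.cycleRange_of_gt hgt
          rw [h3, hvj] at h1
          unfold Pmap
          rw [if_neg (by omega), ← hj, ← hc]
          omega
    have hsσ' := ih ν (fun a b hab hb => hanti a b hab (by omega))
      (fun i hi => hle i (by omega)) σ' hσ'val
    have hsχ : Equiv.Perm.sign χ = Equiv.Perm.sign σ' := by
      rw [hdec, hp0, Equiv.Perm.decomposeFin.symm_sign, if_pos rfl, one_mul]
    have hπ'χ : Equiv.Perm.sign π' = (-1) ^ a * Equiv.Perm.sign σ' := by
      have : Equiv.Perm.sign χ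
          = Equiv.Perm.sign (Fin.cycleRange A) * Equiv.Perm.sign π' := by
        rw [hχdef, Equiv.Perm.sign_trans]
      rw [Fin.sign_cycleRange] at this
      have hA' : (A : ℕ) = a := rfl
      rw [hA'] at this
      have h4 : ((-1 : ℤˣ) ^ a) * Equiv.Perm.sign χ = Equiv.Perm.sign π' := by
        rw [this, ← mul_assoc, ← pow_add, ← two_mul]
        simp [pow_mul]
      rw [← h4, hsχ]
    rw [hπ'sign.symm, hπ'χ, hsσ', Finset.sum_range_succ, pow_add, mul_comm]

def nuOf (d e : ℕ) (μ : Fin d → Fin (e+1)) : ℕ → ℕ :=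
  fun i => if h : i < d then (μ ⟨i, h⟩ : ℕ) else 0

lemma nuOf_le (d e : ℕ) (μ : Fin d → Fin (e+1)) (i : ℕ) : nuOf d e μ i ≤ e := by
  unfold nuOf
  split
  · exact Nat.lt_succ_iff.mp (Fin.is_lt _)
  · omega

lemma nuOf_anti (d e : ℕ) (μ : Fin d → Fin (e+1))
    (hμ : ∀ a b : Fin d, a ≤ b → (μ b : ℕ) ≤ (μ a : ℕ)) :
    ∀ a b, a ≤ b → b < d → nuOf d e μ b ≤ nuOf d e μ a := by
  intro a b hab hb
  unfold nuOf
  rw [dif_pos hb, dif_pos (by omega)]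
  exact hμ ⟨a, by omega⟩ ⟨b, hb⟩ hab

def Fmap (d e : ℕ) (μ : Fin d → Fin (e+1)) (x : Fin (d+e)) : Fin (d+e) :=
  ⟨Pmap d (nuOf d e μ) x, Pmap_lt d e _ (fun i _ => nuOf_le d e μ i) x.isLt⟩

lemma Fmap_val (d e : ℕ) (μ : Fin d → Fin (e+1)) (x : Fin (d+e)) :
    (Fmap d e μ x : ℕ) = Pmap d (nuOf d e μ) (x : ℕ) := rfl

noncomputable def permOf (d e : ℕ) (μ : Fin d → Fin (e+1))
    (hμ : ∀ a b : Fin d, a ≤ b → (μ b : ℕ) ≤ (μ a : ℕ)) : Equiv.Perm (Fin (d+e)) :=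
  Equiv.ofBijective (Fmap d e μ)
    (Finite.injective_iff_bijective.mp fun x y hxy =>
      Fin.ext (Pmap_injOn d (nuOf d e μ) (nuOf_anti d e μ hμ) (congrArg Fin.val hxy)))

lemma permOf_apply (d e : ℕ) (μ : Fin d → Fin (e+1)) (hμ) (x : Fin (d+e)) :
    permOf d e μ hμ x = Fmap d e μ x := rfl

lemma Fmap_castAdd (d e : ℕ) (μ : Fin d → Fin (e+1)) (i : Fin d) :
    (Fmap d e μ (Fin.castAdd e i) : ℕ) = (i : ℕ) + nuOf d e μ (d - 1 - (i : ℕ)) := by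
  rw [Fmap_val]
  show Pmap d (nuOf d e μ) (i : ℕ) = _
  unfold Pmap
  rw [if_pos i.isLt]

lemma Fmap_natAdd (d e : ℕ) (μ : Fin d → Fin (e+1)) (j : Fin e) :
    (Fmap d e μ (Fin.natAdd d j) : ℕ) = d + (j : ℕ) - conjF d (nuOf d e μ) (j : ℕ) := by
  rw [Fmap_val]
  show Pmap d (nuOf d e μ) (d + (j : ℕ)) = _
  unfold Pmap
  rw [if_neg (by omega)]
  have harg : d + (j:ℕ) - d = (j:ℕ) := by omega
  rw [harg]

lemma conjF_nuOf (d e : ℕ) (μ : Fin d → Fin (e+1)) (j : ℕ)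
    [DecidablePred fun i : Fin d => j + 1 ≤ (μ i : ℕ)] :
    conjF d (nuOf d e μ) j = (Finset.univ.filter fun i : Fin d => j + 1 ≤ (μ i : ℕ)).card := by
  classical
  unfold conjF
  rw [Finset.card_filter, Finset.card_filter,
    ← Fin.sum_univ_eq_sum_range (fun i => if j + 1 ≤ nuOf d e μ i then 1 else 0) d]
  refine Finset.sum_congr rfl fun i _ => ?_
  unfold nuOf
  rw [dif_pos i.isLt]
  simp

lemma sum_nuOf (d e : ℕ) (μ : Fin d → Fin (e+1)) :
    ∑ i ∈ Finset.range d, nuOf d e μ i = ∑ i : Fin d, (μ i : ℕ) := by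
  rw [← Fin.sum_univ_eq_sum_range (fun i => nuOf d e μ i) d]
  refine Finset.sum_congr rfl fun i _ => ?_
  unfold nuOf
  rw [dif_pos i.isLt]

lemma sign_permOf (d e : ℕ) (μ : Fin d → Fin (e+1)) (hμ) :
    Equiv.Perm.sign (permOf d e μ hμ) = (-1) ^ (∑ i : Fin d, (μ i : ℕ)) := by
  rw [← sum_nuOf d e μ]
  exact sign_Pmap e d (nuOf d e μ) (nuOf_anti d e μ hμ) (fun i _ => nuOf_le d e μ i)
    (permOf d e μ hμ) (fun x => rfl)

noncomputable def Phi (d e : ℕ) (μ : Fin d → Fin (e+1)) (hμ : ∀ a b : Fin d, a ≤ b → (μ b : ℕ) ≤ (μ a : ℕ))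
    (τ : Equiv.Perm (Fin d)) (ρ : Equiv.Perm (Fin e)) : Equiv.Perm (Fin (d+e)) :=
  (Equiv.permCongr finSumFinEquiv (Equiv.sumCongr τ ρ)).trans (permOf d e μ hμ)

lemma Phi_castAdd (d e : ℕ) (μ : Fin d → Fin (e+1)) (hμ) (τ) (ρ) (i : Fin d) :
    Phi d e μ hμ τ ρ (Fin.castAdd e i) = permOf d e μ hμ (Fin.castAdd e (τ i)) := by
  simp [Phi, Equiv.permCongr_apply, Equiv.trans_apply]

lemma Phi_natAdd (d e : ℕ) (μ : Fin d → Fin (e+1)) (hμ) (τ) (ρ) (j : Fin e) :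
    Phi d e μ hμ τ ρ (Fin.natAdd d j) = permOf d e μ hμ (Fin.natAdd d (ρ j)) := by
  simp [Phi, Equiv.permCongr_apply, Equiv.trans_apply]

lemma sign_Phi (d e : ℕ) (μ : Fin d → Fin (e+1)) (hμ) (τ) (ρ) :
    Equiv.Perm.sign (Phi d e μ hμ τ ρ)
      = (-1) ^ (∑ i : Fin d, (μ i : ℕ)) * Equiv.Perm.sign τ * Equiv.Perm.sign ρ := by
  unfold Phi
  rw [Equiv.Perm.sign_trans, sign_permOf, Equiv.Perm.sign_permCongr, Equiv.Perm.sign_sumCongr,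
    mul_assoc]

lemma Fmap_castAdd_strictMono (d e : ℕ) (μ : Fin d → Fin (e+1))
    (hμ : ∀ a b : Fin d, a ≤ b → (μ b : ℕ) ≤ (μ a : ℕ)) :
    StrictMono (fun i : Fin d => Fmap d e μ (Fin.castAdd e i)) := by
  intro i i' hii
  rw [Fin.lt_def, Fmap_val, Fmap_val]
  exact Pmap_f_lt_f d (nuOf d e μ) (nuOf_anti d e μ hμ) hii i'.isLt


lemma nuOf_apply (d e : ℕ) (μ : Fin d → Fin (e+1)) (i : Fin d) :
    nuOf d e μ (i : ℕ) = (μ i : ℕ) := by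
  unfold nuOf
  rw [dif_pos i.isLt]

lemma strictMono_gap {d : ℕ} (c : Fin d → ℕ) (hc : StrictMono c) :
    ∀ (k : ℕ) (a b : Fin d), (b : ℕ) = (a : ℕ) + k → c a + k ≤ c b := by
  intro k
  induction k with
  | zero =>
    intro a b hb
    have hab : a = b := Fin.ext (by omega)
    subst hab
    omega
  | succ k ih =>
    intro a b hb
    have hlt : (a : ℕ) + k < d := by have := b.isLt; omega
    have h1 := ih a ⟨(a : ℕ) + k, hlt⟩ rfl
    have h2 : c ⟨(a : ℕ) + k, hlt⟩ < c b := hc (by simp [Fin.lt_def]; omega)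
    omega

lemma Phi_inj (d e : ℕ) (μ μ' : Fin d → Fin (e+1)) (hμ) (hμ') (τ τ' : Equiv.Perm (Fin d))
    (ρ ρ' : Equiv.Perm (Fin e)) (heq : Phi d e μ hμ τ ρ = Phi d e μ' hμ' τ' ρ') :
    μ = μ' ∧ τ = τ' ∧ ρ = ρ' := by
  classical
  -- point values agree
  have hpt : ∀ i : Fin d, permOf d e μ hμ (Fin.castAdd e (τ i))
      = permOf d e μ' hμ' (Fin.castAdd e (τ' i)) := by
    intro i
    rw [← Phi_castAdd d e μ hμ τ ρ i, ← Phi_castAdd d e μ' hμ' τ' ρ' i, heq]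
  -- images of the "first block" functions agree
  have him : ∀ (μ₀ : Fin d → Fin (e+1)) (τ₀ : Equiv.Perm (Fin d)),
      Finset.image (fun i => Fmap d e μ₀ (Fin.castAdd e (τ₀ i))) Finset.univ
        = Finset.image (fun i => Fmap d e μ₀ (Fin.castAdd e i)) Finset.univ := by
    intro μ₀ τ₀
    ext x
    simp only [Finset.mem_image, Finset.mem_univ, true_and]
    constructor
    · rintro ⟨i, rfl⟩; exact ⟨τ₀ i, rfl⟩
    · rintro ⟨i, rfl⟩; exact ⟨τ₀.symm i, by rw [Equiv.apply_symm_apply]⟩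
  have hSeq : Finset.image (fun i => Fmap d e μ (Fin.castAdd e i)) Finset.univ
      = Finset.image (fun i => Fmap d e μ' (Fin.castAdd e i)) Finset.univ := by
    rw [← him μ τ, ← him μ' τ']
    refine Finset.image_congr ?_
    intro i _
    exact hpt i
  set S := Finset.image (fun i => Fmap d e μ (Fin.castAdd e i)) Finset.univ with hSdef
  have hcard : S.card = d := by
    rw [hSdef, Finset.card_image_of_injective _ (Fmap_castAdd_strictMono d e μ hμ).injective,
      Finset.card_univ, Fintype.card_fin]
  have hmem1 : ∀ i, Fmap d e μ (Fin.castAdd e i) ∈ S := by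
    intro i
    rw [hSdef]
    exact Finset.mem_image.mpr ⟨i, Finset.mem_univ i, rfl⟩
  have hmem2 : ∀ i, Fmap d e μ' (Fin.castAdd e i) ∈ S := by
    intro i
    rw [hSeq]
    exact Finset.mem_image.mpr ⟨i, Finset.mem_univ i, rfl⟩
  have hu1 := Finset.orderEmbOfFin_unique hcard hmem1 (Fmap_castAdd_strictMono d e μ hμ)
  have hu2 := Finset.orderEmbOfFin_unique hcard hmem2 (Fmap_castAdd_strictMono d e μ' hμ')
  have hfeq : (fun i => Fmap d e μ (Fin.castAdd e i)) = fun i => Fmap d e μ' (Fin.castAdd e i) := by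
    rw [hu1, hu2]
  have hμeq : μ = μ' := by
    funext i
    have hi := i.isLt
    have hj : d - 1 - (i : ℕ) < d := by omega
    have h1 := congrFun hfeq ⟨d - 1 - (i : ℕ), hj⟩
    have h2 := congrArg Fin.val h1
    rw [Fmap_castAdd, Fmap_castAdd] at h2
    have hidx : d - 1 - ((⟨d - 1 - (i : ℕ), hj⟩ : Fin d) : ℕ) = (i : ℕ) := by
      show d - 1 - (d - 1 - (i : ℕ)) = (i : ℕ)
      omega
    rw [hidx] at h2
    rw [nuOf_apply, nuOf_apply] at h2
    exact Fin.ext (by omega)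
  subst hμeq
  have hperm : permOf d e μ hμ = permOf d e μ hμ' := rfl
  refine ⟨rfl, ?_, ?_⟩
  · refine Equiv.ext fun i => ?_
    have h1 := hpt i
    rw [← hperm] at h1
    have h2 := (permOf d e μ hμ).injective h1
    exact Fin.ext (by simpa using congrArg Fin.val h2)
  · refine Equiv.ext fun j => ?_
    have h1 : permOf d e μ hμ (Fin.natAdd d (ρ j)) = permOf d e μ hμ' (Fin.natAdd d (ρ' j)) := by
      rw [← Phi_natAdd d e μ hμ τ ρ j, ← Phi_natAdd d e μ hμ' τ' ρ' j, heq]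
    rw [← hperm] at h1
    have h2 := (permOf d e μ hμ).injective h1
    have h3 := congrArg Fin.val h2
    simp only [Fin.coe_natAdd] at h3
    exact Fin.ext (by omega)


lemma Phi_surj (d e : ℕ) (σ : Equiv.Perm (Fin (d + e))) :
    ∃ (μ : Fin d → Fin (e+1)) (hμ : ∀ a b : Fin d, a ≤ b → (μ b : ℕ) ≤ (μ a : ℕ))
      (τ : Equiv.Perm (Fin d)) (ρ : Equiv.Perm (Fin e)), Phi d e μ hμ τ ρ = σ := by
  classical
  set S := Finset.image (fun i : Fin d => σ (Fin.castAdd e i)) Finset.univ with hSdef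
  have hcastinj : Function.Injective (fun i : Fin d => σ (Fin.castAdd e i)) := by
    intro i j hij
    have h1 := σ.injective hij
    have h2 := congrArg Fin.val h1
    simp only [Fin.coe_castAdd] at h2
    exact Fin.ext h2
  have hScard : S.card = d := by
    rw [hSdef, Finset.card_image_of_injective _ hcastinj, Finset.card_univ, Fintype.card_fin]
  set o := S.orderEmbOfFin hScard with ho
  have homem : ∀ i, (o i) ∈ S := fun i => Finset.orderEmbOfFin_mem S hScard i
  have hcmono : StrictMono (fun i : Fin d => ((o i) : ℕ)) := fun a b hab => o.strictMono hab
  have hgapF : ∀ a b : Fin d, (a : ℕ) ≤ (b : ℕ) → ((o a) : ℕ) + ((b : ℕ) - (a : ℕ)) ≤ (o b) :=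
    fun a b hab => strictMono_gap _ hcmono ((b : ℕ) - (a : ℕ)) a b (by omega)
  -- ℕ-valued version of `o`
  set ov : ℕ → ℕ := fun k => if h : k < d then ((o ⟨k, h⟩ : Fin (d + e)) : ℕ) else 0 with hovdef
  have hovF : ∀ i : Fin d, ov (i : ℕ) = ((o i) : ℕ) := by
    intro i
    show (if h : (i : ℕ) < d then ((o ⟨(i : ℕ), h⟩ : Fin (d + e)) : ℕ) else 0) = _
    rw [dif_pos i.isLt]
  have hgap : ∀ a b : ℕ, a ≤ b → b < d → ov a + (b - a) ≤ ov b := by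
    intro a b hab hb
    have h1 := hgapF ⟨a, by omega⟩ ⟨b, hb⟩ (by exact hab)
    have h2 := hovF ⟨a, by omega⟩
    have h3 := hovF ⟨b, hb⟩
    simp only at h1 h2 h3
    omega
  have hov_lt : ∀ k, k < d → ov k < d + e := by
    intro k hk
    have h1 := hovF ⟨k, hk⟩
    have h2 := (o ⟨k, hk⟩).isLt
    simp only at h1
    omega
  have hub : ∀ k, k < d → ov k ≤ e + k := by
    intro k hk
    have h1 := hgap k (d - 1) (by omega) (by omega)
    have h2 := hov_lt (d - 1) (by omega)
    omega
  have hlb : ∀ k, k < d → k ≤ ov k := by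
    intro k hk
    have h1 := hgap 0 k (by omega) hk
    omega
  set μ : Fin d → Fin (e+1) := fun i =>
    ⟨ov (d - 1 - (i : ℕ)) - (d - 1 - (i : ℕ)), by
      have hi := i.isLt
      have h1 := hub (d - 1 - (i : ℕ)) (by omega)
      omega⟩ with hμdef
  have hμval : ∀ i : Fin d, (μ i : ℕ) = ov (d - 1 - (i : ℕ)) - (d - 1 - (i : ℕ)) :=
    fun i => rfl
  have hμanti : ∀ a b : Fin d, a ≤ b → (μ b : ℕ) ≤ (μ a : ℕ) := by
    intro a b hab
    have hab' : (a : ℕ) ≤ (b : ℕ) := hab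
    have hbd := b.isLt
    have had := a.isLt
    rw [hμval, hμval]
    have h1 := hgap (d - 1 - (b : ℕ)) (d - 1 - (a : ℕ)) (by omega) (by omega)
    have h2 := hlb (d - 1 - (b : ℕ)) (by omega)
    omega
  have hFov : ∀ j : Fin d, (Fmap d e μ (Fin.castAdd e j) : ℕ) = ov (j : ℕ) := by
    intro j
    have hjd := j.isLt
    rw [Fmap_castAdd]
    have h1 : nuOf d e μ (d - 1 - (j : ℕ))
        = ov (d - 1 - (d - 1 - (j : ℕ))) - (d - 1 - (d - 1 - (j : ℕ))) := by
      unfold nuOf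
      rw [dif_pos (by omega : d - 1 - (j : ℕ) < d)]
    have hidx : d - 1 - (d - 1 - (j : ℕ)) = (j : ℕ) := by omega
    rw [h1, hidx]
    have h2 := hlb (j : ℕ) hjd
    omega
  have hFo : ∀ j : Fin d, Fmap d e μ (Fin.castAdd e j) = o j := by
    intro j
    refine Fin.ext ?_
    rw [hFov j, hovF j]
  have hsub : Finset.image (fun i => Fmap d e μ (Fin.castAdd e i)) Finset.univ ⊆ S := by
    intro x hx
    obtain ⟨i, _, rfl⟩ := Finset.mem_image.mp hx
    rw [hFo]
    exact homem i
  have himgcard : (Finset.image (fun i => Fmap d e μ (Fin.castAdd e i)) Finset.univ).card = d := by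
    rw [Finset.card_image_of_injective _ (Fmap_castAdd_strictMono d e μ hμanti).injective,
      Finset.card_univ, Fintype.card_fin]
  have heqS : Finset.image (fun i => Fmap d e μ (Fin.castAdd e i)) Finset.univ = S :=
    Finset.eq_of_subset_of_card_le hsub (by rw [hScard, himgcard])
  -- construction of τ
  have hτlt : ∀ i : Fin d, (((permOf d e μ hμanti).symm (σ (Fin.castAdd e i))) : ℕ) < d := by
    intro i
    have hmem : σ (Fin.castAdd e i) ∈ S := by
      rw [hSdef]
      exact Finset.mem_image.mpr ⟨i, Finset.mem_univ i, rfl⟩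
    rw [← heqS] at hmem
    obtain ⟨i₀, _, hi₀⟩ := Finset.mem_image.mp hmem
    have hx : (permOf d e μ hμanti).symm (σ (Fin.castAdd e i)) = Fin.castAdd e i₀ := by
      rw [← hi₀]
      exact (permOf d e μ hμanti).symm_apply_apply _
    rw [hx]
    simpa using i₀.isLt
  have hτ0inj : Function.Injective (fun i : Fin d =>
      (⟨(((permOf d e μ hμanti).symm (σ (Fin.castAdd e i))) : ℕ), hτlt i⟩ : Fin d)) := by
    intro i j hij
    have hval : (((permOf d e μ hμanti).symm (σ (Fin.castAdd e i))) : ℕ)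
        = (((permOf d e μ hμanti).symm (σ (Fin.castAdd e j))) : ℕ) := by
      simpa using congrArg Fin.val hij
    have h1 : (permOf d e μ hμanti).symm (σ (Fin.castAdd e i))
        = (permOf d e μ hμanti).symm (σ (Fin.castAdd e j)) := Fin.ext hval
    have h2 := σ.injective ((permOf d e μ hμanti).symm.injective h1)
    have h3 := congrArg Fin.val h2
    simp only [Fin.coe_castAdd] at h3
    exact Fin.ext h3
  set τ : Equiv.Perm (Fin d) := Equiv.ofBijective _ (Finite.injective_iff_bijective.mp hτ0inj)
    with hτdef
  -- construction of ρ
  have hρge : ∀ j : Fin e, d ≤ (((permOf d e μ hμanti).symm (σ (Fin.natAdd d j))) : ℕ) := by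
    intro j
    by_contra hlt
    push_neg at hlt
    have hy1 : σ (Fin.natAdd d j)
        = permOf d e μ hμanti (Fin.castAdd e
            (⟨(((permOf d e μ hμanti).symm (σ (Fin.natAdd d j))) : ℕ), hlt⟩ : Fin d)) := by
      have : Fin.castAdd e (⟨(((permOf d e μ hμanti).symm (σ (Fin.natAdd d j))) : ℕ), hlt⟩ : Fin d)
          = (permOf d e μ hμanti).symm (σ (Fin.natAdd d j)) := Fin.ext rfl
      rw [this]
      exact ((permOf d e μ hμanti).apply_symm_apply _).symm
    have hy3 : σ (Fin.natAdd d j) ∈ S := by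
      rw [← heqS]
      exact Finset.mem_image.mpr ⟨_, Finset.mem_univ _, hy1.symm⟩
    rw [hSdef] at hy3
    obtain ⟨i₀, _, hi₀⟩ := Finset.mem_image.mp hy3
    have h2 := congrArg Fin.val (σ.injective hi₀)
    simp only [Fin.coe_castAdd, Fin.coe_natAdd] at h2
    have := i₀.isLt
    omega
  have hρ0inj : Function.Injective (fun j : Fin e =>
      (⟨(((permOf d e μ hμanti).symm (σ (Fin.natAdd d j))) : ℕ) - d, by
        have h1 := ((permOf d e μ hμanti).symm (σ (Fin.natAdd d j))).isLt
        have h2 := hρge j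
        omega⟩ : Fin e)) := by
    intro i j hij
    have hval : (((permOf d e μ hμanti).symm (σ (Fin.natAdd d i))) : ℕ) - d
        = (((permOf d e μ hμanti).symm (σ (Fin.natAdd d j))) : ℕ) - d := by
      simpa using congrArg Fin.val hij
    have h1 : (permOf d e μ hμanti).symm (σ (Fin.natAdd d i))
        = (permOf d e μ hμanti).symm (σ (Fin.natAdd d j)) := by
      have hgi := hρge i
      have hgj := hρge j
      exact Fin.ext (by omega)
    have h2 := σ.injective ((permOf d e μ hμanti).symm.injective h1)
    have h3 := congrArg Fin.val h2
    simp only [Fin.coe_natAdd] at h3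
    exact Fin.ext (by omega)
  set ρ : Equiv.Perm (Fin e) := Equiv.ofBijective _ (Finite.injective_iff_bijective.mp hρ0inj)
    with hρdef
  refine ⟨μ, hμanti, τ, ρ, ?_⟩
  refine Equiv.ext fun x => ?_
  induction x using Fin.addCases with
  | left i =>
    rw [Phi_castAdd]
    have hτi : Fin.castAdd e (τ i) = (permOf d e μ hμanti).symm (σ (Fin.castAdd e i)) := by
      refine Fin.ext ?_
      rw [hτdef]
      rfl
    rw [hτi]
    exact (permOf d e μ hμanti).apply_symm_apply _
  | right j =>
    rw [Phi_natAdd]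
    have hρj : Fin.natAdd d (ρ j) = (permOf d e μ hμanti).symm (σ (Fin.natAdd d j)) := by
      refine Fin.ext ?_
      rw [hρdef]
      have h2 := hρge j
      show d + ((((permOf d e μ hμanti).symm (σ (Fin.natAdd d j))) : ℕ) - d) = _
      omega
    rw [hρj]
    exact (permOf d e μ hμanti).apply_symm_apply _


lemma skewJtDet_eq_sum {R : Type*} [CommRing R] (h : ℤ → R) (m : ℕ) (K L : Fin m → ℤ) :
    skewJtDet h m K L = ∑ σ : Equiv.Perm (Fin m),
      ((Equiv.Perm.sign σ : ℤ) : R) * ∏ i, h (K i - (i : ℤ) + (σ i : ℤ) - L (σ i)) := by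
  rw [skewJtDet, ← Matrix.det_transpose, Matrix.det_apply']
  rfl

open scoped Classical in
noncomputable def Gterm {R : Type*} [CommRing R] (h : ℤ → R) (d e : ℕ)
    (α : Fin d → ℤ) (β : Fin e → ℤ)
    (μ : Fin d → Fin (e + 1)) (τ : Equiv.Perm (Fin d)) (ρ : Equiv.Perm (Fin e)) : R :=
  (-1 : R) ^ (∑ i, (μ i : ℕ)) *
    ((((Equiv.Perm.sign τ : ℤ) : R) * ∏ i, h ((α i + (e : ℤ)) - (i : ℤ) + (τ i : ℤ) -
        ((e : ℤ) - ((μ ⟨d - 1 - ((τ i : ℕ)), by have := (τ i).isLt; omega⟩ : ℕ) : ℤ)))) *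
     (((Equiv.Perm.sign ρ : ℤ) : R) * ∏ j, h (β j - (j : ℤ) + (ρ j : ℤ) -
        ((Finset.univ.filter (fun i : Fin d => (ρ j : ℕ) + 1 ≤ (μ i : ℕ))).card : ℤ))))

open scoped Classical in
lemma Gterm_eq {R : Type*} [CommRing R] (h : ℤ → R) (d e : ℕ)
    (α : Fin d → ℤ) (β : Fin e → ℤ) (μ : Fin d → Fin (e + 1))
    (hμ : ∀ a b : Fin d, a ≤ b → (μ b : ℕ) ≤ (μ a : ℕ))
    (τ : Equiv.Perm (Fin d)) (ρ : Equiv.Perm (Fin e)) :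
    Gterm h d e α β μ τ ρ
      = ((Equiv.Perm.sign (Phi d e μ hμ τ ρ) : ℤ) : R) *
          ∏ x, h (Fin.append α β x - (x : ℤ) + ((Phi d e μ hμ τ ρ) x : ℤ)) := by
  have hsgn : ((Equiv.Perm.sign (Phi d e μ hμ τ ρ) : ℤ) : R)
      = (-1 : R) ^ (∑ i, (μ i : ℕ)) * ((Equiv.Perm.sign τ : ℤ) : R)
          * ((Equiv.Perm.sign ρ : ℤ) : R) := by
    rw [sign_Phi d e μ hμ τ ρ]
    simp only [Units.val_mul, Units.val_pow_eq_pow_val, Int.cast_mul, Int.cast_pow]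
    norm_num
  have hp1 : ∀ i : Fin d,
      h (Fin.append α β (Fin.castAdd e i) - ((Fin.castAdd e i) : ℤ)
          + ((Phi d e μ hμ τ ρ) (Fin.castAdd e i) : ℤ))
        = h ((α i + (e : ℤ)) - (i : ℤ) + (τ i : ℤ) -
            ((e : ℤ) - ((μ ⟨d - 1 - ((τ i : ℕ)), by have := (τ i).isLt; omega⟩ : ℕ) : ℤ))) := by
    intro i
    have hlt : d - 1 - ((τ i : ℕ)) < d := by have := (τ i).isLt; omega
    have hv : (((Phi d e μ hμ τ ρ) (Fin.castAdd e i)) : ℕ)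
        = (τ i : ℕ) + (μ (⟨d - 1 - ((τ i : ℕ)), hlt⟩ : Fin d) : ℕ) := by
      rw [Phi_castAdd, permOf_apply, Fmap_castAdd]
      congr 1
      unfold nuOf
      rw [dif_pos hlt]
    rw [Fin.append_left]
    congr 1
    have hv' : (((Phi d e μ hμ τ ρ) (Fin.castAdd e i)) : ℤ)
        = ((τ i : ℕ) : ℤ) + ((μ (⟨d - 1 - ((τ i : ℕ)), hlt⟩ : Fin d) : ℕ) : ℤ) := by
      exact_mod_cast hv
    have hc : ((Fin.castAdd e i : Fin (d + e)) : ℤ) = ((i : ℕ) : ℤ) := by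
      simp
    rw [hv', hc]
    have : (μ (⟨d - 1 - ((τ i : ℕ)), hlt⟩ : Fin d) : ℕ)
        = (μ ⟨d - 1 - ((τ i : ℕ)), by have := (τ i).isLt; omega⟩ : ℕ) := rfl
    rw [this]
    push_cast
    ring
  have hp2 : ∀ j : Fin e,
      h (Fin.append α β (Fin.natAdd d j) - ((Fin.natAdd d j) : ℤ)
          + ((Phi d e μ hμ τ ρ) (Fin.natAdd d j) : ℤ))
        = h (β j - (j : ℤ) + (ρ j : ℤ) -
            ((Finset.univ.filter (fun i : Fin d => (ρ j : ℕ) + 1 ≤ (μ i : ℕ))).card : ℤ)) := by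
    intro j
    have hcle : conjF d (nuOf d e μ) ((ρ j : ℕ)) ≤ d := conjF_le _ _ _
    have hv : (((Phi d e μ hμ τ ρ) (Fin.natAdd d j)) : ℕ)
        = d + (ρ j : ℕ) - conjF d (nuOf d e μ) ((ρ j : ℕ)) := by
      rw [Phi_natAdd, permOf_apply, Fmap_natAdd]
    have hv' : (((Phi d e μ hμ τ ρ) (Fin.natAdd d j)) : ℤ)
        = (d : ℤ) + ((ρ j : ℕ) : ℤ) - ((conjF d (nuOf d e μ) ((ρ j : ℕ))) : ℤ) := by
      rw [hv]
      push_cast [Nat.cast_sub (by omega : conjF d (nuOf d e μ) ((ρ j : ℕ)) ≤ d + (ρ j : ℕ))]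
      ring
    rw [Fin.append_right]
    congr 1
    have hc : ((Fin.natAdd d j : Fin (d + e)) : ℤ) = (d : ℤ) + ((j : ℕ) : ℤ) := by
      simp
    rw [hv', hc, conjF_nuOf d e μ ((ρ j : ℕ))]
    push_cast
    ring
  have hP1 : (∏ i : Fin d, h (Fin.append α β (Fin.castAdd e i) - ((Fin.castAdd e i) : ℤ)
          + ((Phi d e μ hμ τ ρ) (Fin.castAdd e i) : ℤ)))
      = ∏ i : Fin d, h ((α i + (e : ℤ)) - (i : ℤ) + (τ i : ℤ) -
            ((e : ℤ) - ((μ ⟨d - 1 - ((τ i : ℕ)), by have := (τ i).isLt; omega⟩ : ℕ) : ℤ))) :=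
    Finset.prod_congr rfl fun i _ => hp1 i
  have hP2 : (∏ j : Fin e, h (Fin.append α β (Fin.natAdd d j) - ((Fin.natAdd d j) : ℤ)
          + ((Phi d e μ hμ τ ρ) (Fin.natAdd d j) : ℤ)))
      = ∏ j : Fin e, h (β j - (j : ℤ) + (ρ j : ℤ) -
            ((Finset.univ.filter (fun i : Fin d => (ρ j : ℕ) + 1 ≤ (μ i : ℕ))).card : ℤ)) :=
    Finset.prod_congr rfl fun j _ => hp2 j
  rw [Fin.prod_univ_add (fun x => h (Fin.append α β x - (x : ℤ) + ((Phi d e μ hμ τ ρ) x : ℤ)))]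
  rw [hsgn]
  simp only [hP1, hP2]
  unfold Gterm
  ring

end Stmt8Aux

open scoped Classical in
/-- Laplace expansion for Schur functions. For a `d`-tuple `α` and an
`e`-tuple `β` (with `n = d + e`),
`s_{α⊔β} = Σ_{μ ⊆ (e)^d} (−1)^{|μ|} s_{(α+(e)^d)/μ̂} · s_{β/μ~}`, where `μ̂ = (e)^d − μ^←` is the
complement of `μ` in the `d×e` rectangle and `μ~` is the conjugate partition. -/
theorem stmt8 {R : Type*} [CommRing R] (h : ℤ → R) (hneg : ∀ k : ℤ, k < 0 → h k = 0)
    (d e : ℕ) (α : Fin d → ℤ) (β : Fin e → ℤ) :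
    skewJtDet h (d + e) (Fin.append α β) 0
      = ∑ μ ∈ Finset.univ.filter
            (fun μ : Fin d → Fin (e + 1) => ∀ a b : Fin d, a ≤ b → (μ b : ℕ) ≤ (μ a : ℕ)),
          (-1 : R) ^ (∑ i, (μ i : ℕ)) *
            skewJtDet h d (fun i => α i + (e : ℤ))
              (fun j => (e : ℤ) - ((μ ⟨d - 1 - (j : ℕ), by have := j.isLt; omega⟩ : ℕ) : ℤ)) *
            skewJtDet h e β
              (fun j => ((Finset.univ.filter
                  (fun i : Fin d => (j : ℕ) + 1 ≤ (μ i : ℕ))).card : ℤ)) := by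
  classical
  rw [Stmt8Aux.skewJtDet_eq_sum h (d + e) (Fin.append α β) 0]
  simp only [Pi.zero_apply, sub_zero]
  have hRHS : ∑ μ ∈ Finset.univ.filter
        (fun μ : Fin d → Fin (e + 1) => ∀ a b : Fin d, a ≤ b → (μ b : ℕ) ≤ (μ a : ℕ)),
        (-1 : R) ^ (∑ i, (μ i : ℕ)) *
          skewJtDet h d (fun i => α i + (e : ℤ))
            (fun j => (e : ℤ) - ((μ ⟨d - 1 - (j : ℕ), by have := j.isLt; omega⟩ : ℕ) : ℤ)) *
          skewJtDet h e β
            (fun j => ((Finset.univ.filter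
                (fun i : Fin d => (j : ℕ) + 1 ≤ (μ i : ℕ))).card : ℤ))
      = ∑ μ ∈ Finset.univ.filter
          (fun μ : Fin d → Fin (e + 1) => ∀ a b : Fin d, a ≤ b → (μ b : ℕ) ≤ (μ a : ℕ)),
          ∑ τ : Equiv.Perm (Fin d), ∑ ρ : Equiv.Perm (Fin e),
            Stmt8Aux.Gterm h d e α β μ τ ρ := by
    refine Finset.sum_congr rfl fun μ _ => ?_
    rw [Stmt8Aux.skewJtDet_eq_sum, Stmt8Aux.skewJtDet_eq_sum, mul_assoc, Finset.sum_mul_sum,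
      Finset.mul_sum]
    refine Finset.sum_congr rfl fun τ _ => ?_
    rw [Finset.mul_sum]
    refine Finset.sum_congr rfl fun ρ _ => ?_
    rfl
  rw [hRHS]
  have hsplit : ∑ p ∈ (Finset.univ.filter
        (fun μ : Fin d → Fin (e + 1) => ∀ a b : Fin d, a ≤ b → (μ b : ℕ) ≤ (μ a : ℕ))) ×ˢ
        (Finset.univ : Finset (Equiv.Perm (Fin d) × Equiv.Perm (Fin e))),
        Stmt8Aux.Gterm h d e α β p.1 p.2.1 p.2.2
      = ∑ μ ∈ Finset.univ.filter
          (fun μ : Fin d → Fin (e + 1) => ∀ a b : Fin d, a ≤ b → (μ b : ℕ) ≤ (μ a : ℕ)),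
          ∑ τ : Equiv.Perm (Fin d), ∑ ρ : Equiv.Perm (Fin e),
            Stmt8Aux.Gterm h d e α β μ τ ρ := by
    rw [Finset.sum_product]
    exact Finset.sum_congr rfl fun μ _ => Fintype.sum_prod_type _
  rw [← hsplit]
  have hmem : ∀ p : (Fin d → Fin (e + 1)) × (Equiv.Perm (Fin d) × Equiv.Perm (Fin e)),
      p ∈ (Finset.univ.filter
        (fun μ : Fin d → Fin (e + 1) => ∀ a b : Fin d, a ≤ b → (μ b : ℕ) ≤ (μ a : ℕ))) ×ˢ
        (Finset.univ : Finset (Equiv.Perm (Fin d) × Equiv.Perm (Fin e))) →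
      ∀ a b : Fin d, a ≤ b → (p.1 b : ℕ) ≤ (p.1 a : ℕ) :=
    fun p hp => (Finset.mem_filter.mp (Finset.mem_product.mp hp).1).2
  refine (Finset.sum_bij
    (fun p hp => Stmt8Aux.Phi d e p.1 (hmem p hp) p.2.1 p.2.2)
    (fun _ _ => Finset.mem_univ _) ?_ ?_ ?_).symm
  · intro p hp q hq heq
    obtain ⟨h1, h2, h3⟩ := Stmt8Aux.Phi_inj d e p.1 q.1 (hmem p hp) (hmem q hq)
      p.2.1 q.2.1 p.2.2 q.2.2 heq
    exact Prod.ext h1 (Prod.ext h2 h3)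
  · intro σ _
    obtain ⟨μ, hμ, τ, ρ, hΦ⟩ := Stmt8Aux.Phi_surj d e σ
    refine ⟨(μ, (τ, ρ)), ?_, ?_⟩
    · exact Finset.mem_product.mpr
        ⟨Finset.mem_filter.mpr ⟨Finset.mem_univ _, hμ⟩, Finset.mem_univ _⟩
    · exact hΦ
  · intro p hp
    exact Stmt8Aux.Gterm_eq h d e α β p.1 (hmem p hp) p.2.1 p.2.2
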